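/- arXiv:1110.2014 — 2 statements merged into one kernel-verified Lean document; each statement's English description precedes it below -/
import Mathlib

section
/- Let t ≥ 100 be a real number, and let P, Q be real numbers satisfying t + 2P ≥ 0 and P² + Q² ≤ t⁴/4. Then |1 - 1/t - (P + iQ)/t² + (P + iQ)²/t⁴| + (1/(4t^{3/2}))·(t + 2P)^{1/2} ≤ 1, where the absolute value is of a complex number. -/
lemma pichorides_key (s p q : ℝ) (hs0 : 0 < s) (hs : s ≤ 1/100) (hsp : 0 ≤ s + 2*p)
    (hpq : p^2 + q^2 ≤ 1/4) :
    16*(1 - s - p + p^2 - q^2)^2 + 16*q^2*(1-2*p)^2 ≤ 16 - 8*s - 8*p + s^2 + 2*p*s := by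
  nlinarith [sq_nonneg q, sq_nonneg p, sq_nonneg (p+q), sq_nonneg (p-q), sq_nonneg (p^2+q^2),
    sq_nonneg (1-2*p), sq_nonneg (s+2*p), mul_nonneg hs0.le hsp, sq_nonneg (p^2+q^2-1/4),
    mul_nonneg (mul_nonneg hs0.le hs0.le) hsp, sq_nonneg (s+p)]

/-- Pichorides's elementary inequality (Lemma 1 of Pichorides). -/
theorem pichorides_inequality (t P Q : ℝ) (ht : 100 ≤ t) (h1 : 0 ≤ t + 2 * P)
    (h2 : P ^ 2 + Q ^ 2 ≤ t ^ 4 / 4) :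
    ‖(1 - 1 / (t : ℂ) - ((P : ℂ) + (Q : ℂ) * Complex.I) / (t : ℂ) ^ 2
        + ((P : ℂ) + (Q : ℂ) * Complex.I) ^ 2 / (t : ℂ) ^ 4)‖
      + (1 / (4 * t ^ ((3 : ℝ) / 2))) * (t + 2 * P) ^ ((1 : ℝ) / 2) ≤ 1 := by
  have ht0 : (0:ℝ) < t := by linarith
  have htne : t ≠ 0 := ht0.ne'
  have htC : (t:ℂ) ≠ 0 := by exact_mod_cast ht0.ne'
  -- normalized variables
  set s : ℝ := 1/t with hs_def
  set p : ℝ := P/t^2 with hp_def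
  set q : ℝ := Q/t^2 with hq_def
  have hs0 : 0 < s := by positivity
  have hs100 : s ≤ 1/100 := by
    rw [hs_def, div_le_div_iff₀ ht0 (by norm_num)]; linarith
  have hsp : 0 ≤ s + 2*p := by
    have h : s + 2*p = (t + 2*P)/t^2 := by rw [hs_def, hp_def]; field_simp
    rw [h]; positivity
  have hpq : p^2 + q^2 ≤ 1/4 := by
    rw [hp_def, hq_def, div_pow, div_pow, ← add_div,
      div_le_div_iff₀ (by positivity) (by norm_num)]
    nlinarith
  -- rewrite the complex number
  have hX : (1 - 1 / (t : ℂ) - ((P : ℂ) + (Q : ℂ) * Complex.I) / (t : ℂ) ^ 2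
        + ((P : ℂ) + (Q : ℂ) * Complex.I) ^ 2 / (t : ℂ) ^ 4)
      = ((1 - s - p + p^2 - q^2 : ℝ) : ℂ) + ((2*p*q - q : ℝ) : ℂ) * Complex.I := by
    rw [hs_def, hp_def, hq_def]
    push_cast
    linear_combination ((Q:ℂ)/(t:ℂ)^2)^2 * Complex.I_sq
  rw [hX, Complex.norm_add_mul_I]
  -- rewrite the rpow term
  have h32 : t ^ ((3:ℝ)/2) = Real.sqrt (t^3) := by
    rw [Real.sqrt_eq_rpow, ← Real.rpow_natCast t 3, ← Real.rpow_mul ht0.le]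
    norm_num
  have h12 : (t + 2*P) ^ ((1:ℝ)/2) = Real.sqrt (t + 2*P) := (Real.sqrt_eq_rpow _).symm
  have hδ : (1 / (4 * t ^ ((3:ℝ)/2))) * (t + 2*P) ^ ((1:ℝ)/2)
      = Real.sqrt ((t + 2*P)/t^3) / 4 := by
    rw [h32, h12, Real.sqrt_div h1]
    ring
  rw [hδ]
  have hAeq : (t + 2*P)/t^3 = s^2 + 2*p*s := by
    rw [hs_def, hp_def, div_eq_iff (pow_ne_zero 3 htne)]
    field_simp
  clear_value s p q
  set D : ℝ := Real.sqrt ((t + 2*P)/t^3) / 4 with hD_def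
  have hDsq : Real.sqrt ((t + 2*P)/t^3) ^ 2 = s^2 + 2*p*s := by
    rw [Real.sq_sqrt (by positivity), hAeq]
  have hspnn : 0 ≤ s + p := by linarith
  have hple : p ≤ 1/2 := by nlinarith [sq_nonneg q]
  have hDle : D ≤ (s + p)/4 := by
    rw [hD_def]
    have h : (t + 2*P)/t^3 ≤ (s+p)^2 := by
      rw [hAeq]; nlinarith [sq_nonneg p]
    have h' := Real.sqrt_le_sqrt h
    rw [Real.sqrt_sq hspnn] at h'
    linarith
  have hD0 : 0 ≤ D := by positivity
  have hDsq' : D^2 = (s^2 + 2*p*s)/16 := by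
    rw [hD_def, div_pow, hDsq]; norm_num
  clear_value D
  have h1D : 0 ≤ 1 - D := by linarith
  -- reduce to squares
  have hkey := pichorides_key s p q hs0 hs100 hsp hpq
  have hmain : (1 - s - p + p^2 - q^2)^2 + (2*p*q - q)^2 ≤ (1 - D)^2 := by
    have hexp : (1-D)^2 = 1 - 2*D + D^2 := by ring
    have hYeq : (2*p*q - q)^2 = q^2*(1-2*p)^2 := by ring
    rw [hexp, hDsq', hYeq]
    linarith
  have hfin := Real.sqrt_le_sqrt hmain
  rw [Real.sqrt_sq h1D] at hfin
  linarith
end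

section
/- Let Φ₁, …, Φ_t : 𝕋^d → ℂ be measurable functions with ‖Φ_j‖_∞ ≤ 1 for all j, let g : 𝕋^d → ℂ satisfy ‖g‖_∞ ≤ 1, and let t ≥ 100 be an integer. Define W(x) = ∑_{1≤i<j≤t} Φ_i(x)·conj(Φ_j(x)) and h(x) = g(x)·(1 − 1/t − W(x)/t² + W(x)²/t⁴) + (1/(4t^{3/2}))·∑_{j=1}^t Φ_j(x). Then ‖h‖_∞ ≤ 1. -/
open Finset

lemma cdp_card_bound (t : ℕ) :
    2 * ((Finset.univ.filter (fun p : Fin t × Fin t => p.1 < p.2)).card) ≤ t * t := by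
  classical
  set s₁ := Finset.univ.filter (fun p : Fin t × Fin t => p.1 < p.2) with hs₁
  set s₂ := Finset.univ.filter (fun p : Fin t × Fin t => p.2 < p.1) with hs₂
  have hbij : s₂.card = s₁.card := by
    apply Finset.card_nbij' (i := Prod.swap) (j := Prod.swap) <;>
      simp [hs₁, hs₂, Finset.mem_filter, Set.MapsTo, Set.LeftInvOn, Set.RightInvOn]
  have hdisj : Disjoint s₁ s₂ := by
    rw [Finset.disjoint_left]
    intro p h1 h2
    simp only [hs₁, hs₂, Finset.mem_filter] at h1 h2
    exact absurd h2.2 (lt_asymm h1.2)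
  have hle : (s₁ ∪ s₂).card ≤ (Finset.univ : Finset (Fin t × Fin t)).card :=
    Finset.card_le_univ _
  rw [Finset.card_union_of_disjoint hdisj] at hle
  simp only [Finset.card_univ, Fintype.card_prod, Fintype.card_fin] at hle
  omega

lemma cdp_norm_sum_sq (t : ℕ) (z : Fin t → ℂ) :
    ‖∑ j, z j‖ ^ 2 = (∑ j, ‖z j‖ ^ 2)
      + 2 * (∑ p ∈ Finset.univ.filter (fun p : Fin t × Fin t => p.1 < p.2),
          z p.1 * (starRingEnd ℂ) (z p.2)).re := by
  classical
  have key : ((∑ j, z j) * (starRingEnd ℂ) (∑ j, z j)).re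
      = ∑ p : Fin t × Fin t, (z p.1 * (starRingEnd ℂ) (z p.2)).re := by
    rw [map_sum, Finset.sum_mul_sum, ← Finset.sum_product', Complex.re_sum]
    rfl
  have hL : ((∑ j, z j) * (starRingEnd ℂ) (∑ j, z j)).re = ‖∑ j, z j‖ ^ 2 := by
    rw [Complex.mul_conj]
    rw [Complex.normSq_eq_norm_sq]
    norm_cast
  set r : Fin t × Fin t → ℝ := fun p => (z p.1 * (starRingEnd ℂ) (z p.2)).re with hr
  have hsplit : ∑ p : Fin t × Fin t, r p
      = (∑ p ∈ Finset.univ.filter (fun p : Fin t × Fin t => p.1 < p.2), r p)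
        + ∑ p ∈ Finset.univ.filter (fun p : Fin t × Fin t => ¬ p.1 < p.2), r p :=
    (Finset.sum_filter_add_sum_filter_not _ _ _).symm
  have hsplit2 : ∑ p ∈ Finset.univ.filter (fun p : Fin t × Fin t => ¬ p.1 < p.2), r p
      = (∑ p ∈ (Finset.univ.filter (fun p : Fin t × Fin t => ¬ p.1 < p.2)).filter
            (fun p => p.2 < p.1), r p)
        + ∑ p ∈ (Finset.univ.filter (fun p : Fin t × Fin t => ¬ p.1 < p.2)).filter
            (fun p => ¬ p.2 < p.1), r p :=
    (Finset.sum_filter_add_sum_filter_not _ _ _).symm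
  have hgtset : (Finset.univ.filter (fun p : Fin t × Fin t => ¬ p.1 < p.2)).filter
      (fun p => p.2 < p.1) = Finset.univ.filter (fun p : Fin t × Fin t => p.2 < p.1) := by
    rw [Finset.filter_filter]
    apply Finset.filter_congr
    intro p _
    constructor
    · exact fun h => h.2
    · exact fun h => ⟨lt_asymm h, h⟩
  have hgt : ∑ p ∈ Finset.univ.filter (fun p : Fin t × Fin t => p.2 < p.1), r p
      = ∑ p ∈ Finset.univ.filter (fun p : Fin t × Fin t => p.1 < p.2), r p := by
    apply Finset.sum_nbij' (i := Prod.swap) (j := Prod.swap)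
    · intro p hp; simp only [Finset.mem_filter] at *; exact ⟨Finset.mem_univ _, hp.2⟩
    · intro p hp; simp only [Finset.mem_filter] at *; exact ⟨Finset.mem_univ _, hp.2⟩
    · intro p _; simp
    · intro p _; simp
    · intro p _
      simp only [hr, Prod.fst_swap, Prod.snd_swap]
      rw [show z p.2 * (starRingEnd ℂ) (z p.1)
          = (starRingEnd ℂ) (z p.1 * (starRingEnd ℂ) (z p.2)) by
        rw [map_mul, Complex.conj_conj]; ring]
      exact (Complex.conj_re _).symm
  have hdiag : ∑ p ∈ (Finset.univ.filter (fun p : Fin t × Fin t => ¬ p.1 < p.2)).filter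
      (fun p => ¬ p.2 < p.1), r p = ∑ j, ‖z j‖ ^ 2 := by
    apply Finset.sum_nbij' (i := fun p => p.1) (j := fun j => (j, j))
    · intro p _; exact Finset.mem_univ _
    · intro j _
      simp only [Finset.mem_filter]
      exact ⟨⟨Finset.mem_univ _, lt_irrefl _⟩, lt_irrefl _⟩
    · intro p hp
      simp only [Finset.mem_filter] at hp
      have : p.1 = p.2 := le_antisymm (le_of_not_gt hp.2) (le_of_not_gt hp.1.2)
      exact Prod.ext rfl this
    · intro j _; rfl
    · intro p hp
      simp only [Finset.mem_filter] at hp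
      have hpe : p.2 = p.1 := le_antisymm (le_of_not_gt hp.1.2) (le_of_not_gt hp.2)
      simp only [hr, hpe, Complex.mul_conj]
      rw [Complex.normSq_eq_norm_sq]
      norm_cast
  rw [← hL, key, hsplit, hsplit2, hgtset, hgt, hdiag, Complex.re_sum]
  ring


lemma cdp_pich (t : ℝ) (ht : 100 ≤ t) (p q s : ℝ)
    (hr : p ^ 2 + q ^ 2 ≤ 1 / 4) (hs0 : 0 ≤ s)
    (hs2 : s ^ 2 ≤ t * (1 + 2 * t * p)) :
    Real.sqrt ((1 - 1 / t - p + (p ^ 2 - q ^ 2)) ^ 2 + (-q + 2 * p * q) ^ 2)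
      + 1 / (4 * t ^ ((3 : ℝ) / 2)) * s ≤ 1 := by
  have ht0 : (0 : ℝ) < t := by linarith
  have hF0 : 0 ≤ 1 + 2 * t * p := by nlinarith [sq_nonneg s]
  have hp1 : p ≤ 1 / 2 := by nlinarith [sq_nonneg q]
  have hplow : -(1 / 200) ≤ p := by
    rcases le_or_gt 0 p with h | h
    · linarith
    · nlinarith [mul_nonneg (by linarith : (0:ℝ) ≤ t - 100) (by linarith : (0:ℝ) ≤ -p)]
  have hinv : 1 / t ≤ 1 / 100 := by
    rw [div_le_div_iff₀ ht0 (by norm_num)]; linarith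
  have hinv0 : 0 < 1 / t := by positivity
  have hnn : 0 ≤ 1 - 1 / t - p + p ^ 2 := by nlinarith [sq_nonneg (p - 1 / 2)]
  have haux : q ^ 2 + 2 / t - 1 - 2 * p + 2 * p ^ 2 ≤ 0 := by
    have h2t : 2 / t ≤ 2 / 100 := by
      rw [div_le_div_iff₀ ht0 (by norm_num)]; linarith
    nlinarith [mul_nonneg (by linarith : (0:ℝ) ≤ p + 1 / 200)
      (by linarith : (0:ℝ) ≤ 1 / 2 - p)]
  have hE : (1 - 1 / t - p + (p ^ 2 - q ^ 2)) ^ 2 + (-q + 2 * p * q) ^ 2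
      ≤ (1 - 1 / t - p + p ^ 2) ^ 2 := by
    nlinarith [mul_nonpos_of_nonneg_of_nonpos (sq_nonneg q) haux]
  have h1 : Real.sqrt ((1 - 1 / t - p + (p ^ 2 - q ^ 2)) ^ 2 + (-q + 2 * p * q) ^ 2)
      ≤ 1 - 1 / t - p + p ^ 2 := by
    calc Real.sqrt ((1 - 1 / t - p + (p ^ 2 - q ^ 2)) ^ 2 + (-q + 2 * p * q) ^ 2)
        ≤ Real.sqrt ((1 - 1 / t - p + p ^ 2) ^ 2) := Real.sqrt_le_sqrt hE
      _ = 1 - 1 / t - p + p ^ 2 := Real.sqrt_sq hnn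
  have hs' : s ≤ Real.sqrt t * Real.sqrt (1 + 2 * t * p) := by
    rw [← Real.sqrt_mul (le_of_lt ht0)]
    have h := Real.sqrt_le_sqrt hs2
    rwa [Real.sqrt_sq hs0] at h
  have hsqF : Real.sqrt (1 + 2 * t * p) ≤ 4 + 4 * t * p - 4 * t * p ^ 2 := by
    have h1' : Real.sqrt (1 + 2 * t * p) ≤ (1 + (1 + 2 * t * p)) / 2 := by
      nlinarith [sq_nonneg (Real.sqrt (1 + 2 * t * p) - 1), Real.sq_sqrt hF0,
        Real.sqrt_nonneg (1 + 2 * t * p)]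
    nlinarith [mul_nonneg hF0 (by linarith : (0:ℝ) ≤ 1 - 2 * p)]
  have hrw : t ^ ((3 : ℝ) / 2) = t * Real.sqrt t := by
    rw [show (3 : ℝ) / 2 = 1 + 1 / 2 by norm_num, Real.rpow_add ht0, Real.rpow_one,
      ← Real.sqrt_eq_rpow]
  have hst0 : 0 < Real.sqrt t := Real.sqrt_pos.2 ht0
  have c1 : 1 / (4 * t ^ ((3 : ℝ) / 2)) * s ≤ 1 / t + p - p ^ 2 := by
    rw [hrw]
    have h2 : 1 / (4 * (t * Real.sqrt t)) * s
        ≤ 1 / (4 * (t * Real.sqrt t)) * (Real.sqrt t * Real.sqrt (1 + 2 * t * p)) :=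
      mul_le_mul_of_nonneg_left hs' (by positivity)
    have e1 : 1 / (4 * (t * Real.sqrt t)) * (Real.sqrt t * Real.sqrt (1 + 2 * t * p))
        = Real.sqrt (1 + 2 * t * p) / (4 * t) := by
      field_simp
    have h3 : Real.sqrt (1 + 2 * t * p) / (4 * t)
        ≤ (4 + 4 * t * p - 4 * t * p ^ 2) / (4 * t) := by gcongr ?_ / _
    have e2 : (4 + 4 * t * p - 4 * t * p ^ 2) / (4 * t) = 1 / t + p - p ^ 2 := by
      field_simp
    calc 1 / (4 * (t * Real.sqrt t)) * s
        ≤ 1 / (4 * (t * Real.sqrt t)) * (Real.sqrt t * Real.sqrt (1 + 2 * t * p)) := h2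
      _ = Real.sqrt (1 + 2 * t * p) / (4 * t) := e1
      _ ≤ (4 + 4 * t * p - 4 * t * p ^ 2) / (4 * t) := h3
      _ = 1 / t + p - p ^ 2 := e2
  linarith


/-- The key pointwise bound in the Cohen–Davenport–Pichorides iteration. -/
theorem cdp_pointwise_bound (d t : ℕ) (ht : 100 ≤ t)
    (Φ : Fin t → (Fin d → ℝ) → ℂ) (g : (Fin d → ℝ) → ℂ)
    (hΦ : ∀ j x, ‖Φ j x‖ ≤ 1) (hg : ∀ x, ‖g x‖ ≤ 1)
    (W : (Fin d → ℝ) → ℂ)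
    (hW : ∀ x, W x = ∑ p ∈ Finset.univ.filter (fun p : Fin t × Fin t => p.1 < p.2),
        Φ p.1 x * (starRingEnd ℂ) (Φ p.2 x))
    (h : (Fin d → ℝ) → ℂ)
    (hh : ∀ x, h x = g x * (1 - 1 / (t : ℂ) - W x / (t : ℂ) ^ 2 + (W x) ^ 2 / (t : ℂ) ^ 4)
        + (((1 / (4 * (t : ℝ) ^ ((3 : ℝ) / 2)) : ℝ) : ℂ)) * ∑ j, Φ j x) :
    ∀ x, ‖h x‖ ≤ 1 := by
  intro x
  have htR : (100 : ℝ) ≤ (t : ℝ) := by exact_mod_cast ht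
  have ht0 : (0 : ℝ) < (t : ℝ) := by linarith
  set T : ℝ := (t : ℝ) with hT
  set a : ℝ := (W x).re with ha
  set b : ℝ := (W x).im with hb
  -- norm of the sum identity
  have hSsq : ‖∑ j, Φ j x‖ ^ 2 = (∑ j, ‖Φ j x‖ ^ 2) + 2 * (W x).re := by
    rw [hW x]
    simpa using cdp_norm_sum_sq t (fun j => Φ j x)
  have hsum1 : (∑ j, ‖Φ j x‖ ^ 2) ≤ T := by
    calc (∑ j, ‖Φ j x‖ ^ 2) ≤ ∑ _j : Fin t, (1 : ℝ) :=
          Finset.sum_le_sum fun j _ => pow_le_one₀ (norm_nonneg _) (hΦ j x)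
      _ = T := by simp [hT]
  -- bound on |W x|
  have hwabs : ‖W x‖ ≤ T ^ 2 / 2 := by
    rw [hW x]
    have h1 : ‖∑ p ∈ Finset.univ.filter (fun p : Fin t × Fin t => p.1 < p.2),
        Φ p.1 x * (starRingEnd ℂ) (Φ p.2 x)‖
        ≤ ∑ p ∈ Finset.univ.filter (fun p : Fin t × Fin t => p.1 < p.2), (1 : ℝ) := by
      refine (norm_sum_le _ _).trans (Finset.sum_le_sum fun p _ => ?_)
      rw [norm_mul]
      calc ‖Φ p.1 x‖ * ‖(starRingEnd ℂ) (Φ p.2 x)‖ ≤ 1 * 1 := by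
            apply mul_le_mul (hΦ p.1 x) _ (norm_nonneg _) zero_le_one
            rw [Complex.norm_conj]
            exact hΦ p.2 x
        _ = 1 := one_mul 1
    have h2 : ((Finset.univ.filter (fun p : Fin t × Fin t => p.1 < p.2)).card : ℝ)
        ≤ T ^ 2 / 2 := by
      have := cdp_card_bound t
      have : (2 * ((Finset.univ.filter (fun p : Fin t × Fin t => p.1 < p.2)).card) : ℝ)
          ≤ (t : ℝ) * t := by exact_mod_cast this
      rw [hT]; nlinarith
    rw [Finset.sum_const, nsmul_eq_mul, mul_one] at h1
    exact h1.trans h2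
  have hab : a ^ 2 + b ^ 2 ≤ T ^ 4 / 4 := by
    have h1 : a ^ 2 + b ^ 2 = ‖W x‖ ^ 2 := by
      rw [Complex.sq_norm, Complex.normSq_apply, ha, hb]; ring
    rw [h1]
    nlinarith [norm_nonneg (W x), hwabs]
  set p : ℝ := a / T ^ 2 with hp
  set q : ℝ := b / T ^ 2 with hq
  have hr : p ^ 2 + q ^ 2 ≤ 1 / 4 := by
    rw [hp, hq, div_pow, div_pow, ← add_div, div_le_iff₀ (by positivity)]
    nlinarith
  have hs2 : ‖∑ j, Φ j x‖ ^ 2 ≤ T * (1 + 2 * T * p) := by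
    have e : T * (1 + 2 * T * p) = T + 2 * a := by
      rw [hp]; field_simp
    rw [e, hSsq]; linarith
  -- compute re and im of the A factor
  set A : ℂ := 1 - 1 / (t : ℂ) - W x / (t : ℂ) ^ 2 + (W x) ^ 2 / (t : ℂ) ^ 4 with hA
  have hTc : (t : ℂ) = ((T : ℝ) : ℂ) := by rw [hT]; push_cast; ring
  have h2c : ((T : ℝ) : ℂ) ^ 2 = ((T ^ 2 : ℝ) : ℂ) := by push_cast; ring
  have h4c : ((T : ℝ) : ℂ) ^ 4 = ((T ^ 4 : ℝ) : ℂ) := by push_cast; ring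
  have hw2re : ((W x) ^ 2).re = a ^ 2 - b ^ 2 := by
    rw [sq, Complex.mul_re, ha, hb]; ring
  have hw2im : ((W x) ^ 2).im = 2 * a * b := by
    rw [sq, Complex.mul_im, ha, hb]; ring
  have hAre : A.re = 1 - 1 / T - p + (p ^ 2 - q ^ 2) := by
    rw [hA, hTc, h2c, h4c]
    simp only [Complex.add_re, Complex.sub_re, Complex.one_re, Complex.div_ofReal_re,
      Complex.one_im, hw2re]
    rw [hp, hq]
    have hT0' : T ≠ 0 := ne_of_gt ht0
    field_simp
    ring
  have hAim : A.im = -q + 2 * p * q := by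
    rw [hA, hTc, h2c, h4c]
    simp only [Complex.add_im, Complex.sub_im, Complex.one_im, Complex.div_ofReal_im,
      Complex.one_re, hw2im]
    rw [hp, hq]
    have hT0' : T ≠ 0 := ne_of_gt ht0
    field_simp
    ring
  have hAnorm : ‖A‖ = Real.sqrt ((1 - 1 / T - p + (p ^ 2 - q ^ 2)) ^ 2
      + (-q + 2 * p * q) ^ 2) := by
    rw [Complex.norm_def, Complex.normSq_apply, hAre, hAim]
    ring_nf
  -- final assembly
  have key := cdp_pich T htR p q ‖∑ j, Φ j x‖ hr (norm_nonneg _) hs2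
  rw [hh x]
  calc ‖g x * A + (((1 / (4 * T ^ ((3 : ℝ) / 2)) : ℝ) : ℂ)) * ∑ j, Φ j x‖
      ≤ ‖g x * A‖ + ‖(((1 / (4 * T ^ ((3 : ℝ) / 2)) : ℝ) : ℂ)) * ∑ j, Φ j x‖ :=
        norm_add_le _ _
    _ = ‖g x‖ * ‖A‖ + |1 / (4 * T ^ ((3 : ℝ) / 2))| * ‖∑ j, Φ j x‖ := by
        rw [norm_mul, norm_mul, Complex.norm_real, Real.norm_eq_abs]
    _ ≤ 1 * ‖A‖ + 1 / (4 * T ^ ((3 : ℝ) / 2)) * ‖∑ j, Φ j x‖ := by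
        have habs : |1 / (4 * T ^ ((3 : ℝ) / 2))| = 1 / (4 * T ^ ((3 : ℝ) / 2)) :=
          abs_of_nonneg (by positivity)
        rw [habs]
        gcongr
        exact hg x
    _ ≤ 1 := by
        rw [one_mul, hAnorm]
        exact key
end
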